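/- (Hölder-type bound on the nonlinearity in dual Besov Strichartz space) Let d ≥ 6 and F(z) = μ|z|^{4/(d−2)}z. Then for functions u, w on I×ℝ^d, ‖F(u)−F(w)‖_{L_t^{2(d+1)/(d+3)} Ḃ^{1/2}_{2(d+1)/(d+3),2}} ≲ ‖u−w‖_{W} (‖u−w‖_{S}^{4/(d−2)} + ‖w‖_{S}^{4/(d−2)}) + ‖u−w‖_{S}^{4/(d−2)} ‖w‖_{W}, where ‖·‖_W = ‖·‖_{L_t^{2(d+1)/(d−1)} Ḃ^{1/2}_{2(d+1)/(d−1),2}} and ‖·‖_S = ‖·‖_{L_{t,x}^{2(d+1)/(d−2)}}. -/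

import Mathlib

open MeasureTheory ENNReal

noncomputable section

/-- Homogeneous Besov `Ḃ^s_{p,2}` seminorm via the integral difference characterization. -/
def besovInt (d : ℕ) (s : ℝ) (p : ℝ≥0∞)
    (f : EuclideanSpace ℝ (Fin d) → ℝ) : ℝ≥0∞ :=
  (∫⁻ t : EuclideanSpace ℝ (Fin d),
      (eLpNorm (fun x => f (x + t) - f x) p volume) ^ (2 : ℝ)
        / (‖t‖₊ : ℝ≥0∞) ^ ((d : ℝ) + 2 * s)) ^ (1 / 2 : ℝ)

/-- The mixed time norm `(∫_I N(t)^q dt)^{1/q}`. -/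
def LtNorm (I : Set ℝ) (q : ℝ) (N : ℝ → ℝ≥0∞) : ℝ≥0∞ :=
  (∫⁻ t in I, N t ^ q) ^ (1 / q)

/-- The Besov–Strichartz norm `‖u‖ = ‖u‖_{L_t^q Ḃ^{1/2}_{q,2}}` with exponent `q`. -/
def WqNorm (d : ℕ) (I : Set ℝ) (q : ℝ) (u : ℝ → EuclideanSpace ℝ (Fin d) → ℝ) : ℝ≥0∞ :=
  LtNorm I q fun t => besovInt d (1 / 2) (ENNReal.ofReal q) (u t)

/-- The scattering norm `‖u‖_S = ‖u‖_{L_{t,x}^{2(d+1)/(d−2)}}`. -/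
def SNorm (d : ℕ) (I : Set ℝ) (u : ℝ → EuclideanSpace ℝ (Fin d) → ℝ) : ℝ≥0∞ :=
  LtNorm I (2 * ((d : ℝ) + 1) / ((d : ℝ) - 2)) fun t =>
    eLpNorm (u t) (ENNReal.ofReal (2 * ((d : ℝ) + 1) / ((d : ℝ) - 2))) volume

/-- The energy-critical nonlinearity `F(z) = μ|z|^{4/(d-2)} z`. -/
def Fnl (d : ℕ) (μ : ℝ) (z : ℝ) : ℝ := μ * |z| ^ ((4 : ℝ) / ((d : ℝ) - 2)) * z

end

/- ----------------------------------------------------------------- -/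
/- Auxiliary lemmas                                                   -/
/- ----------------------------------------------------------------- -/

section aux
open scoped ENNReal

namespace Stmt16Aux

/-- derivative of `z ↦ |z|^a * z`. -/
lemma phi_hasDeriv {a : ℝ} (ha : 0 < a) (z : ℝ) :
    HasDerivAt (fun y : ℝ => |y| ^ a * y) ((a + 1) * |z| ^ a) z := by
  rcases lt_trichotomy z 0 with hz | hz | hz
  · have h1 : HasDerivAt (fun y : ℝ => (-y) ^ a * y)
        ((a * (-z) ^ (a - 1) * (-1)) * z + (-z) ^ a * 1) z := by
      have hrpow : HasDerivAt (fun y : ℝ => (-y) ^ a) (a * (-z) ^ (a - 1) * (-1)) z := by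
        have := (Real.hasDerivAt_rpow_const (p := a) (Or.inl (neg_ne_zero.mpr hz.ne))).comp z
          (hasDerivAt_neg z)
        simpa [Function.comp_def] using this
      simpa [Pi.mul_def] using hrpow.mul (hasDerivAt_id z)
    have heq : (fun y : ℝ => (-y) ^ a * y) =ᶠ[nhds z] fun y : ℝ => |y| ^ a * y := by
      filter_upwards [eventually_lt_nhds hz] with y hy
      rw [abs_of_neg hy]
    have h2 := h1.congr_of_eventuallyEq heq.symm
    refine h2.congr_deriv ?_
    have : |z| = -z := abs_of_neg hz
    rw [this]
    have hz' : (0:ℝ) < -z := by linarith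
    have : (-z) ^ (a - 1) * (-z) = (-z) ^ a := by
      nth_rewrite 2 [← Real.rpow_one (-z)]
      rw [← Real.rpow_add hz']; ring_nf
    nlinarith [this]
  · subst hz
    have : ((a:ℝ) + 1) * |(0:ℝ)| ^ a = 0 := by
      rw [abs_zero, Real.zero_rpow ha.ne']; ring
    rw [this]
    rw [hasDerivAt_iff_tendsto_slope]
    have hcont : Filter.Tendsto (fun y : ℝ => |y| ^ a) (nhds 0) (nhds 0) := by
      have h := (continuous_abs.rpow_const (fun x => Or.inr ha.le)).tendsto 0
      simpa [Real.zero_rpow ha.ne'] using h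
    apply (hcont.mono_left nhdsWithin_le_nhds).congr'
    filter_upwards [self_mem_nhdsWithin] with y hy
    simp only [Set.mem_compl_iff, Set.mem_singleton_iff] at hy
    rw [slope_def_field]
    field_simp
    simp
  · have h1 : HasDerivAt (fun y : ℝ => y ^ a * y)
        ((a * z ^ (a - 1)) * z + z ^ a * 1) z :=
      (Real.hasDerivAt_rpow_const (p := a) (Or.inl hz.ne')).mul (hasDerivAt_id z)
    have heq : (fun y : ℝ => y ^ a * y) =ᶠ[nhds z] fun y : ℝ => |y| ^ a * y := by
      filter_upwards [eventually_gt_nhds hz] with y hy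
      rw [abs_of_pos hy]
    have h2 := h1.congr_of_eventuallyEq heq.symm
    refine h2.congr_deriv ?_
    rw [abs_of_pos hz]
    have : z ^ (a - 1) * z = z ^ a := by
      nth_rewrite 2 [← Real.rpow_one z]
      rw [← Real.rpow_add hz]; ring_nf
    nlinarith [this]

lemma rpow_subadd {a : ℝ} (ha0 : 0 ≤ a) (ha1 : a ≤ 1) {x y : ℝ} (hx : 0 ≤ x) (hy : 0 ≤ y) :
    (x + y) ^ a ≤ x ^ a + y ^ a := by
  have h := NNReal.rpow_add_le_add_rpow (x.toNNReal) (y.toNNReal) ha0 ha1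
  have := NNReal.coe_le_coe.mpr h
  push_cast at this
  rwa [Real.coe_toNNReal x hx, Real.coe_toNNReal y hy] at this

lemma rpow_abs_holder {a : ℝ} (ha0 : 0 ≤ a) (ha1 : a ≤ 1) (x y : ℝ) :
    |(|x| ^ a - |y| ^ a)| ≤ |x - y| ^ a := by
  have key : ∀ u v : ℝ, |u| ^ a ≤ |v| ^ a + |u - v| ^ a := by
    intro u v
    have h1 : |u| ≤ |v| + |u - v| := by
      calc |u| = |v + (u - v)| := by ring_nf
        _ ≤ |v| + |u - v| := abs_add_le _ _
    calc |u| ^ a ≤ (|v| + |u - v|) ^ a :=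
          Real.rpow_le_rpow (abs_nonneg _) h1 ha0
      _ ≤ |v| ^ a + |u - v| ^ a := rpow_subadd ha0 ha1 (abs_nonneg _) (abs_nonneg _)
  rw [abs_sub_le_iff]
  constructor
  · linarith [key x y]
  · have := key y x
    rw [abs_sub_comm] at this
    linarith

/-- Lipschitz-type bound for `φ z = |z|^a z`. -/
lemma phi_diff_le {a : ℝ} (ha : 0 < a) {x y M : ℝ} (hx : |x| ≤ M) (hy : |y| ≤ M) :
    |(|x| ^ a * x - |y| ^ a * y)| ≤ (a + 1) * M ^ a * |x - y| := by
  have hM : 0 ≤ M := le_trans (abs_nonneg x) hx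
  have := Convex.norm_image_sub_le_of_norm_hasDerivWithin_le
    (f := fun y : ℝ => |y| ^ a * y) (f' := fun z => (a + 1) * |z| ^ a)
    (s := Set.uIcc x y) (C := (a + 1) * M ^ a)
    (fun z _ => (phi_hasDeriv ha z).hasDerivWithinAt)
    (fun z hz => by
      have hzM : |z| ≤ M := by
        rcases Set.mem_uIcc.mp hz with ⟨h1, h2⟩ | ⟨h1, h2⟩
        · exact le_trans (abs_le_max_abs_abs h1 h2) (max_le hx hy)
        · exact le_trans (abs_le_max_abs_abs h1 h2) (max_le hy hx)
      have h1 : |z| ^ a ≤ M ^ a := Real.rpow_le_rpow (abs_nonneg z) hzM ha.le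
      have h2 : (0:ℝ) ≤ |z| ^ a := Real.rpow_nonneg (abs_nonneg z) a
      rw [Real.norm_eq_abs, abs_of_nonneg (by positivity)]
      have h3 : (0:ℝ) < a + 1 := by linarith
      show (a + 1) * |z| ^ a ≤ (a + 1) * M ^ a
      nlinarith)
    (convex_uIcc x y) Set.left_mem_uIcc Set.right_mem_uIcc
  simp only [Real.norm_eq_abs] at this
  rw [abs_sub_comm ((|y| ^ a * y)) _, abs_sub_comm y x] at this
  exact this

/-- second difference bound via MVT on `c ↦ φ(c+v) − φ(c)`. -/
lemma phi_second_diff {a : ℝ} (ha0 : 0 < a) (ha1 : a ≤ 1) (v c e : ℝ) :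
    |(|c + v| ^ a * (c + v) - |c| ^ a * c - (|e + v| ^ a * (e + v) - |e| ^ a * e))|
      ≤ (a + 1) * |v| ^ a * |c - e| := by
  have := Convex.norm_image_sub_le_of_norm_hasDerivWithin_le
    (f := fun x : ℝ => |x + v| ^ a * (x + v) - |x| ^ a * x)
    (f' := fun x => (a + 1) * |x + v| ^ a - (a + 1) * |x| ^ a)
    (s := (Set.univ : Set ℝ)) (C := (a + 1) * |v| ^ a)
    (fun x _ => by
      have h1 : HasDerivAt (fun x : ℝ => |x + v| ^ a * (x + v)) ((a + 1) * |x + v| ^ a) x := by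
        have := (phi_hasDeriv ha0 (x + v)).comp x ((hasDerivAt_id x).add_const v)
        simpa [Function.comp_def] using this
      exact ((h1.sub (phi_hasDeriv ha0 x))).hasDerivWithinAt)
    (fun x _ => by
      rw [Real.norm_eq_abs]
      have h := rpow_abs_holder ha0.le ha1 (x + v) x
      have h2 : x + v - x = v := by ring
      rw [h2] at h
      have ha' : (0:ℝ) < a + 1 := by linarith
      calc |(a + 1) * |x + v| ^ a - (a + 1) * |x| ^ a|
          = (a + 1) * |(|x + v| ^ a - |x| ^ a)| := by
            rw [← mul_sub, abs_mul, abs_of_pos ha']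
        _ ≤ (a + 1) * |v| ^ a := mul_le_mul_of_nonneg_left h ha'.le)
    convex_univ (Set.mem_univ c) (Set.mem_univ e)
  simp only [Real.norm_eq_abs] at this
  rw [abs_sub_comm (|e + v| ^ a * (e + v) - |e| ^ a * e) _, abs_sub_comm e c] at this
  exact this

lemma key_pointwise {a : ℝ} (ha0 : 0 < a) (ha1 : a ≤ 1) (A B C E : ℝ) :
    |(|A| ^ a * A - |B| ^ a * B - (|C| ^ a * C - |E| ^ a * E))|
      ≤ (a + 1) * (|A - C - (B - E)| * (|C| ^ a + |A - C| ^ a + |B - E| ^ a)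
          + |C - E| * |B - E| ^ a) := by
  set m := C + (B - E) with hm
  set M := |C| + |A - C| + |B - E| with hM
  have hsum : M ^ a ≤ |C| ^ a + |A - C| ^ a + |B - E| ^ a := by
    calc M ^ a ≤ (|C| + |A - C|) ^ a + |B - E| ^ a :=
          rpow_subadd ha0.le ha1 (by positivity) (abs_nonneg _)
      _ ≤ |C| ^ a + |A - C| ^ a + |B - E| ^ a := by
          have := rpow_subadd ha0.le ha1 (abs_nonneg C) (abs_nonneg (A - C))
          linarith
  have hA : |A| ≤ M := by
    have h1 : |A| ≤ |C| + |A - C| := by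
      have := abs_add_le C (A - C)
      simpa using this
    have := abs_nonneg (B - E)
    rw [hM]; linarith
  have hmM : |m| ≤ M := by
    have h1 : |m| ≤ |C| + |B - E| := by
      rw [hm]; exact abs_add_le C (B - E)
    have := abs_nonneg (A - C)
    rw [hM]; linarith
  have hT1 : |(|A| ^ a * A - |m| ^ a * m)| ≤ (a + 1) * M ^ a * |A - C - (B - E)| := by
    have h := phi_diff_le ha0 hA hmM
    have h2 : A - m = A - C - (B - E) := by rw [hm]; ring
    rwa [h2] at h
  have hT2 : |(|m| ^ a * m - |C| ^ a * C - (|B| ^ a * B - |E| ^ a * E))|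
      ≤ (a + 1) * |B - E| ^ a * |C - E| := by
    have h := phi_second_diff ha0 ha1 (B - E) C E
    have h2 : E + (B - E) = B := by ring
    rw [h2] at h
    exact h
  have hMa : (0:ℝ) ≤ M ^ a := Real.rpow_nonneg (by positivity) a
  have ha' : (0:ℝ) < a + 1 := by linarith
  calc |(|A| ^ a * A - |B| ^ a * B - (|C| ^ a * C - |E| ^ a * E))|
      = |(|A| ^ a * A - |m| ^ a * m)
          + (|m| ^ a * m - |C| ^ a * C - (|B| ^ a * B - |E| ^ a * E))| := by
        ring_nf
    _ ≤ |(|A| ^ a * A - |m| ^ a * m)|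
          + |(|m| ^ a * m - |C| ^ a * C - (|B| ^ a * B - |E| ^ a * E))| := abs_add_le _ _
    _ ≤ (a + 1) * M ^ a * |A - C - (B - E)| + (a + 1) * |B - E| ^ a * |C - E| := by
        linarith
    _ ≤ (a + 1) * (|A - C - (B - E)| * (|C| ^ a + |A - C| ^ a + |B - E| ^ a)
          + |C - E| * |B - E| ^ a) := by
        have h1 : M ^ a * |A - C - (B - E)| ≤
            |A - C - (B - E)| * (|C| ^ a + |A - C| ^ a + |B - E| ^ a) := by
          rw [mul_comm]
          exact mul_le_mul_of_nonneg_left hsum (abs_nonneg _)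
        have h2 : |B - E| ^ a * |C - E| = |C - E| * |B - E| ^ a := by ring
        nlinarith [abs_nonneg (A - C - (B - E)), abs_nonneg (C - E)]

/-- weight in the Besov characterization. -/
noncomputable def wgt (d : ℕ) (h : EuclideanSpace ℝ (Fin d)) : ℝ≥0∞ :=
  (‖h‖₊ : ℝ≥0∞) ^ (-(((d : ℝ) + 1) / 2))

lemma wgt_meas (d : ℕ) : Measurable (wgt d) :=
  (continuous_nnnorm.measurable.coe_nnreal_ennreal).pow_const _

lemma besov_rw (d : ℕ) (P : ℝ≥0∞) (f : EuclideanSpace ℝ (Fin d) → ℝ) :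
    besovInt d (1/2) P f
      = (∫⁻ h : EuclideanSpace ℝ (Fin d),
          (eLpNorm (fun x => f (x + h) - f x) P volume * wgt d h) ^ (2 : ℝ)) ^ (1/2 : ℝ) := by
  unfold besovInt
  congr 1
  apply lintegral_congr
  intro h
  have he : (d : ℝ) + 2 * (1/2) = (d : ℝ) + 1 := by ring
  rw [he, ENNReal.mul_rpow_of_nonneg _ _ (by norm_num : (0:ℝ) ≤ 2)]
  unfold wgt
  rw [← ENNReal.rpow_mul]
  have : (-(((d : ℝ) + 1) / 2)) * 2 = -((d:ℝ)+1) := by ring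
  rw [this, ENNReal.rpow_neg, div_eq_mul_inv]

/-- weighted L² Minkowski step. -/
lemma wmink {X : Type*} [MeasurableSpace X] (ν : MeasureTheory.Measure X)
    (N A B g : X → ℝ≥0∞) (XC YC : ℝ≥0∞)
    (hA : Measurable A) (hB : Measurable B) (hg : Measurable g)
    (hle : ∀ h, N h ≤ XC * A h + YC * B h) :
    (∫⁻ h, (N h * g h) ^ (2:ℝ) ∂ν) ^ (1/2 : ℝ)
      ≤ XC * (∫⁻ h, (A h * g h) ^ (2:ℝ) ∂ν) ^ (1/2 : ℝ)
        + YC * (∫⁻ h, (B h * g h) ^ (2:ℝ) ∂ν) ^ (1/2 : ℝ) := by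
  have step1 : (∫⁻ h, (N h * g h) ^ (2:ℝ) ∂ν) ^ (1/2 : ℝ)
      ≤ (∫⁻ h, ((fun h => XC * (A h * g h))
          + fun h => YC * (B h * g h)) h ^ (2:ℝ) ∂ν) ^ (1/2:ℝ) := by
    apply ENNReal.rpow_le_rpow _ (by norm_num)
    apply lintegral_mono
    intro h
    apply ENNReal.rpow_le_rpow _ (by norm_num)
    simp only [Pi.add_apply]
    calc N h * g h ≤ (XC * A h + YC * B h) * g h :=
          mul_le_mul_left (hle h) _
      _ = XC * (A h * g h) + YC * (B h * g h) := by ring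
  have step2 := ENNReal.lintegral_Lp_add_le (p := (2:ℝ)) (μ := ν)
    (f := fun h => XC * (A h * g h)) (g := fun h => YC * (B h * g h))
    ((measurable_const.mul (hA.mul hg)).aemeasurable)
    ((measurable_const.mul (hB.mul hg)).aemeasurable)
    (by norm_num)
  have pull : ∀ (c : ℝ≥0∞) (F : X → ℝ≥0∞), Measurable F →
      (∫⁻ h, (c * F h) ^ (2:ℝ) ∂ν) ^ (1/2:ℝ) = c * (∫⁻ h, F h ^ (2:ℝ) ∂ν) ^ (1/2:ℝ) := by
    intro c F hF
    have : ∀ h, (c * F h) ^ (2:ℝ) = c ^ (2:ℝ) * F h ^ (2:ℝ) := fun h =>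
      ENNReal.mul_rpow_of_nonneg _ _ (by norm_num)
    simp_rw [this]
    rw [MeasureTheory.lintegral_const_mul _ (hF.pow_const _),
      ENNReal.mul_rpow_of_nonneg _ _ (by norm_num : (0:ℝ) ≤ 1/2), ← ENNReal.rpow_mul]
    norm_num
  calc (∫⁻ h, (N h * g h) ^ (2:ℝ) ∂ν) ^ (1/2 : ℝ)
      ≤ _ := step1
    _ ≤ (∫⁻ h, (XC * (A h * g h)) ^ (2:ℝ) ∂ν) ^ (1/2:ℝ)
        + (∫⁻ h, (YC * (B h * g h)) ^ (2:ℝ) ∂ν) ^ (1/2:ℝ) := step2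
    _ = XC * (∫⁻ h, (A h * g h) ^ (2:ℝ) ∂ν) ^ (1/2 : ℝ)
        + YC * (∫⁻ h, (B h * g h) ^ (2:ℝ) ∂ν) ^ (1/2 : ℝ) := by
        rw [pull XC (fun h => A h * g h) (hA.mul hg), pull YC (fun h => B h * g h) (hB.mul hg)]

/-- Hölder in the time variable. -/
lemma tholder {X : Type*} [MeasurableSpace X] (ν : MeasureTheory.Measure X)
    (f g : X → ℝ≥0∞) (hf : Measurable f) (hg : Measurable g)
    {q' pt qt qq ss : ℝ} (hconj : pt.HolderConjugate qt) (hq' : 0 < q')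
    (hqq : q' * pt = qq) (hss : q' * qt = ss) :
    (∫⁻ t, (f t * g t) ^ q' ∂ν) ^ (1/q')
      ≤ (∫⁻ t, f t ^ qq ∂ν) ^ (1/qq) * (∫⁻ t, g t ^ ss ∂ν) ^ (1/ss) := by
  have h1 : ∀ t, (f t * g t) ^ q' = f t ^ q' * g t ^ q' := fun t =>
    ENNReal.mul_rpow_of_nonneg _ _ hq'.le
  have h2 := ENNReal.lintegral_mul_le_Lp_mul_Lq ν hconj
    ((hf.pow_const q').aemeasurable) ((hg.pow_const q').aemeasurable)
  simp only [Pi.mul_apply] at h2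
  have h3 : (∫⁻ t, (f t * g t) ^ q' ∂ν)
      ≤ (∫⁻ t, f t ^ (q' * pt) ∂ν) ^ (1/pt) * (∫⁻ t, g t ^ (q' * qt) ∂ν) ^ (1/qt) := by
    simp_rw [h1, ENNReal.rpow_mul]
    exact h2
  rw [hqq, hss] at h3
  calc (∫⁻ t, (f t * g t) ^ q' ∂ν) ^ (1/q')
      ≤ ((∫⁻ t, f t ^ qq ∂ν) ^ (1/pt) * (∫⁻ t, g t ^ ss ∂ν) ^ (1/qt)) ^ (1/q') :=
        ENNReal.rpow_le_rpow h3 (by positivity)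
    _ = (∫⁻ t, f t ^ qq ∂ν) ^ (1/qq) * (∫⁻ t, g t ^ ss ∂ν) ^ (1/ss) := by
        rw [ENNReal.mul_rpow_of_nonneg _ _ (by positivity : (0:ℝ) ≤ 1/q'),
          ← ENNReal.rpow_mul, ← ENNReal.rpow_mul]
        congr 2
        · rw [← hqq]; ring
        · rw [← hss]; ring

/-- pull a constant out of an `L^s` norm. -/
lemma const_pull {X : Type*} [MeasurableSpace X] (ν : MeasureTheory.Measure X)
    (c : ℝ≥0∞) (f : X → ℝ≥0∞) (hf : Measurable f) {ss : ℝ} (hss : 0 < ss) :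
    (∫⁻ t, (c * f t) ^ ss ∂ν) ^ (1/ss) = c * (∫⁻ t, f t ^ ss ∂ν) ^ (1/ss) := by
  have h1 : ∀ t, (c * f t) ^ ss = c ^ ss * f t ^ ss := fun t =>
    ENNReal.mul_rpow_of_nonneg _ _ hss.le
  simp_rw [h1]
  rw [MeasureTheory.lintegral_const_mul _ (hf.pow_const _),
    ENNReal.mul_rpow_of_nonneg _ _ (by positivity : (0:ℝ) ≤ 1/ss), ← ENNReal.rpow_mul]
  rw [mul_one_div_cancel hss.ne', ENNReal.rpow_one]

/-- triangle inequality for three functions in `L^s`, `1 ≤ s`. -/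
lemma lp3 {X : Type*} [MeasurableSpace X] (ν : MeasureTheory.Measure X)
    (f1 f2 f3 : X → ℝ≥0∞) (h1 : Measurable f1) (h2 : Measurable f2) (h3 : Measurable f3)
    {ss : ℝ} (hss : 1 ≤ ss) :
    (∫⁻ t, (f1 t + f2 t + f3 t) ^ ss ∂ν) ^ (1/ss)
      ≤ (∫⁻ t, f1 t ^ ss ∂ν) ^ (1/ss) + (∫⁻ t, f2 t ^ ss ∂ν) ^ (1/ss)
        + (∫⁻ t, f3 t ^ ss ∂ν) ^ (1/ss) := by
  have ha := ENNReal.lintegral_Lp_add_le (μ := ν) (f := fun t => f1 t + f2 t) (g := f3)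
    ((h1.add h2).aemeasurable) h3.aemeasurable hss
  have hb := ENNReal.lintegral_Lp_add_le (μ := ν) (f := f1) (g := f2)
    h1.aemeasurable h2.aemeasurable hss
  simp only [Pi.add_apply] at ha hb
  calc (∫⁻ t, (f1 t + f2 t + f3 t) ^ ss ∂ν) ^ (1/ss)
      ≤ (∫⁻ t, (f1 t + f2 t) ^ ss ∂ν) ^ (1/ss) + (∫⁻ t, f3 t ^ ss ∂ν) ^ (1/ss) := ha
    _ ≤ _ := add_le_add_left hb _

/-- measurability of the translated-difference `eLpNorm` family. -/
lemma meas_A {d : ℕ} (v : ℝ → EuclideanSpace ℝ (Fin d) → ℝ)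
    (hv : Measurable (Function.uncurry v)) (P : ℝ≥0∞) (hP0 : P ≠ 0) (hPt : P ≠ ∞) :
    Measurable (fun th : ℝ × EuclideanSpace ℝ (Fin d) =>
      eLpNorm (fun x => v th.1 (x + th.2) - v th.1 x) P volume) := by
  have hrw : (fun th : ℝ × EuclideanSpace ℝ (Fin d) =>
      eLpNorm (fun x => v th.1 (x + th.2) - v th.1 x) P volume)
      = fun th => (∫⁻ x, ‖v th.1 (x + th.2) - v th.1 x‖ₑ ^ P.toReal)
          ^ (1 / P.toReal) := by
    funext th
    rw [MeasureTheory.eLpNorm_eq_lintegral_rpow_enorm_toReal hP0 hPt]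
  rw [hrw]
  apply Measurable.pow_const
  apply Measurable.lintegral_prod_right'
    (f := fun q : (ℝ × EuclideanSpace ℝ (Fin d)) × EuclideanSpace ℝ (Fin d) =>
      ‖v q.1.1 (q.2 + q.1.2) - v q.1.1 q.2‖ₑ ^ P.toReal)
  have m1 : Measurable fun q : (ℝ × EuclideanSpace ℝ (Fin d)) × EuclideanSpace ℝ (Fin d) =>
      v q.1.1 (q.2 + q.1.2) :=
    hv.comp ((measurable_fst.fst).prodMk (measurable_snd.add measurable_fst.snd))
  have m2 : Measurable fun q : (ℝ × EuclideanSpace ℝ (Fin d)) × EuclideanSpace ℝ (Fin d) =>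
      v q.1.1 q.2 :=
    hv.comp ((measurable_fst.fst).prodMk measurable_snd)
  exact ((m1.sub m2).enorm).pow_const _

/-- measurability of `t ↦ eLpNorm (v t) P`. -/
lemma meas_V {d : ℕ} (v : ℝ → EuclideanSpace ℝ (Fin d) → ℝ)
    (hv : Measurable (Function.uncurry v)) (P : ℝ≥0∞) (hP0 : P ≠ 0) (hPt : P ≠ ∞) :
    Measurable (fun t : ℝ => eLpNorm (v t) P volume) := by
  have hrw : (fun t : ℝ => eLpNorm (v t) P volume)
      = fun t => (∫⁻ x, ‖v t x‖ₑ ^ P.toReal) ^ (1 / P.toReal) := by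
    funext t
    rw [MeasureTheory.eLpNorm_eq_lintegral_rpow_enorm_toReal hP0 hPt]
  rw [hrw]
  apply Measurable.pow_const
  apply Measurable.lintegral_prod_right'
    (f := fun q : ℝ × EuclideanSpace ℝ (Fin d) => ‖v q.1 q.2‖ₑ ^ P.toReal)
  exact (hv.enorm).pow_const _

/-- measurability of `t ↦ besovInt d (1/2) P (v t)`. -/
lemma meas_besov {d : ℕ} (v : ℝ → EuclideanSpace ℝ (Fin d) → ℝ)
    (hv : Measurable (Function.uncurry v)) (P : ℝ≥0∞) (hP0 : P ≠ 0) (hPt : P ≠ ∞) :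
    Measurable (fun t : ℝ => besovInt d (1/2) P (v t)) := by
  have hrw : (fun t : ℝ => besovInt d (1/2) P (v t))
      = fun t => (∫⁻ h, ((fun th : ℝ × EuclideanSpace ℝ (Fin d) =>
          eLpNorm (fun x => v th.1 (x + th.2) - v th.1 x) P volume) (t, h)
            * wgt d h) ^ (2:ℝ)) ^ (1/2 : ℝ) := by
    funext t
    exact besov_rw d P (v t)
  rw [hrw]
  apply Measurable.pow_const
  exact Measurable.lintegral_prod_right'
    (f := fun z : ℝ × EuclideanSpace ℝ (Fin d) =>
      ((fun th : ℝ × EuclideanSpace ℝ (Fin d) =>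
        eLpNorm (fun x => v th.1 (x + th.2) - v th.1 x) P volume) z * wgt d z.2) ^ (2:ℝ))
    ((((meas_A v hv P hP0 hPt)).mul ((wgt_meas d).comp measurable_snd)).pow_const _)

/-- the space-variable Hölder step. -/
lemma spatial {d : ℕ} {a : ℝ} (ha0 : 0 < a) (ha1 : a ≤ 1) (haF : a = 4 / ((d:ℝ) - 2))
    {μ : ℝ} (hμ : |μ| = 1)
    (p' p sE rE : ℝ≥0∞) (hp'1 : 1 ≤ p') (hsE1 : 1 ≤ sE)
    (hpqr : 1 / p' = 1 / sE + 1 / p) (hsr : sE * ENNReal.ofReal a = rE)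
    (ut wt : EuclideanSpace ℝ (Fin d) → ℝ) (hut : Measurable ut) (hwt : Measurable wt)
    (h : EuclideanSpace ℝ (Fin d)) :
    eLpNorm (fun x => (Fnl d μ (ut (x+h)) - Fnl d μ (wt (x+h)))
        - (Fnl d μ (ut x) - Fnl d μ (wt x))) p' volume
      ≤ (‖a + 1‖₊ : ℝ≥0∞) *
          ((eLpNorm wt rE volume ^ a
              + eLpNorm (fun x => ut x - wt x) rE volume ^ a
              + eLpNorm (fun x => ut x - wt x) rE volume ^ a)
            * eLpNorm (fun x => (ut (x+h) - wt (x+h)) - (ut x - wt x)) p volume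
          + eLpNorm (fun x => ut x - wt x) rE volume ^ a
            * eLpNorm (fun x => wt (x+h) - wt x) p volume) := by
  set vt : EuclideanSpace ℝ (Fin d) → ℝ := fun x => ut x - wt x with hvt
  have hvtm : Measurable vt := hut.sub hwt
  have hrpow_cont : Continuous fun z : ℝ => |z| ^ a :=
    continuous_abs.rpow_const fun _ => Or.inr ha0.le
  have hSS : Measurable fun x => |wt (x+h)| ^ a + |vt (x+h)| ^ a + |vt x| ^ a := by
    have m1 : Measurable fun x : EuclideanSpace ℝ (Fin d) => x + h :=
      measurable_id.add_const h
    exact ((hrpow_cont.measurable.comp (hwt.comp m1)).add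
      (hrpow_cont.measurable.comp (hvtm.comp m1))).add
      (hrpow_cont.measurable.comp hvtm)
  set SS : EuclideanSpace ℝ (Fin d) → ℝ :=
    fun x => |wt (x+h)| ^ a + |vt (x+h)| ^ a + |vt x| ^ a with hSSdef
  set g1 : EuclideanSpace ℝ (Fin d) → ℝ := fun x => SS x * ((vt (x+h)) - vt x) with hg1
  set g2 : EuclideanSpace ℝ (Fin d) → ℝ := fun x => |vt x| ^ a * (wt (x+h) - wt x) with hg2
  have hpt : ∀ x, ‖(Fnl d μ (ut (x+h)) - Fnl d μ (wt (x+h)))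
      - (Fnl d μ (ut x) - Fnl d μ (wt x))‖ ≤ ((a+1) • (fun x => |g1 x| + |g2 x|)) x := by
    intro x
    have key := key_pointwise ha0 ha1 (ut (x+h)) (ut x) (wt (x+h)) (wt x)
    have heq : (Fnl d μ (ut (x+h)) - Fnl d μ (wt (x+h)))
        - (Fnl d μ (ut x) - Fnl d μ (wt x))
        = μ * (|ut (x+h)| ^ a * ut (x+h) - |ut x| ^ a * ut x
            - (|wt (x+h)| ^ a * wt (x+h) - |wt x| ^ a * wt x)) := by
      simp only [Fnl, ← haF]; ring
    rw [Real.norm_eq_abs, heq, abs_mul, hμ, one_mul]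
    refine key.trans ?_
    simp only [Pi.smul_apply, smul_eq_mul, hg1, hg2, hSSdef, hvt]
    rw [abs_mul, abs_mul]
    have e1 : |SS x| = SS x := abs_of_nonneg (by positivity)
    have e2 : |(|vt x| ^ a)| = |vt x| ^ a := abs_of_nonneg (by positivity)
    simp only [hSSdef, hvt] at e1 e2
    rw [e1, e2]
    have : (0:ℝ) ≤ a + 1 := by linarith
    nlinarith [abs_nonneg ((ut (x+h) - wt (x+h)) - (ut x - wt x)),
      abs_nonneg (wt (x+h) - wt x),
      Real.rpow_nonneg (abs_nonneg (wt (x+h))) a,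
      Real.rpow_nonneg (abs_nonneg (ut (x+h) - wt (x+h))) a,
      Real.rpow_nonneg (abs_nonneg (ut x - wt x)) a]
  have m1 : Measurable fun x : EuclideanSpace ℝ (Fin d) => x + h :=
    measurable_id.add_const h
  have hdv : Measurable fun x => vt (x+h) - vt x := (hvtm.comp m1).sub hvtm
  have hdw : Measurable fun x => wt (x+h) - wt x := (hwt.comp m1).sub hwt
  have hg1m : Measurable g1 := hSS.mul hdv
  have hg2m : Measurable g2 :=
    ((hrpow_cont.measurable.comp hvtm)).mul hdw
  have habs1 : (fun x => |g1 x|) = fun x => ‖g1 x‖ := by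
    funext x; rw [Real.norm_eq_abs]
  have habs2 : (fun x => |g2 x|) = fun x => ‖g2 x‖ := by
    funext x; rw [Real.norm_eq_abs]
  have hN : eLpNorm (fun x => (Fnl d μ (ut (x+h)) - Fnl d μ (wt (x+h)))
      - (Fnl d μ (ut x) - Fnl d μ (wt x))) p' volume
      ≤ eLpNorm ((a+1) • fun x => |g1 x| + |g2 x|) p' volume := eLpNorm_mono_real hpt
  rw [eLpNorm_const_smul] at hN
  have tri : eLpNorm (fun x => |g1 x| + |g2 x|) p' volume
      ≤ eLpNorm g1 p' volume + eLpNorm g2 p' volume := by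
    have t1 := eLpNorm_add_le (μ := (volume : MeasureTheory.Measure (EuclideanSpace ℝ (Fin d))))
      (p := p') (f := fun x => |g1 x|) (g := fun x => |g2 x|)
      (hg1m.abs.aestronglyMeasurable) (hg2m.abs.aestronglyMeasurable) hp'1
    have e1 : eLpNorm (fun x => |g1 x|) p' volume = eLpNorm g1 p' volume := by
      rw [habs1, eLpNorm_norm]
    have e2 : eLpNorm (fun x => |g2 x|) p' volume = eLpNorm g2 p' volume := by
      rw [habs2, eLpNorm_norm]
    calc eLpNorm (fun x => |g1 x| + |g2 x|) p' volume
        = eLpNorm ((fun x => |g1 x|) + fun x => |g2 x|) p' volume := rfl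
      _ ≤ _ := t1
      _ = _ := by rw [e1, e2]
  haveI : ENNReal.HolderTriple sE p p' := ⟨by simpa [one_div] using hpqr.symm⟩
  have hold1 : eLpNorm g1 p' volume
      ≤ eLpNorm SS sE volume * eLpNorm (fun x => vt (x+h) - vt x) p volume := by
    have := eLpNorm_smul_le_mul_eLpNorm
      (μ := (volume : MeasureTheory.Measure (EuclideanSpace ℝ (Fin d))))
      (f := fun x => vt (x+h) - vt x) (φ := SS) (p := sE) (q := p) (r := p')
      hdv.aestronglyMeasurable hSS.aestronglyMeasurable
    exact this
  have hold2 : eLpNorm g2 p' volume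
      ≤ eLpNorm (fun x => |vt x| ^ a) sE volume
          * eLpNorm (fun x => wt (x+h) - wt x) p volume := by
    have := eLpNorm_smul_le_mul_eLpNorm
      (μ := (volume : MeasureTheory.Measure (EuclideanSpace ℝ (Fin d))))
      (f := fun x => wt (x+h) - wt x) (φ := fun x => |vt x| ^ a) (p := sE) (q := p) (r := p')
      hdw.aestronglyMeasurable (hrpow_cont.measurable.comp hvtm).aestronglyMeasurable
    exact this
  have hterm : ∀ (f : EuclideanSpace ℝ (Fin d) → ℝ), Measurable f →
      eLpNorm (fun x => |f x| ^ a) sE volume = eLpNorm f rE volume ^ a := by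
    intro f hf
    have e : (fun x => |f x| ^ a) = fun x => ‖f x‖ ^ a := by
      funext x; rw [Real.norm_eq_abs]
    rw [e, eLpNorm_norm_rpow f ha0, hsr]
  have htrans : ∀ (f : EuclideanSpace ℝ (Fin d) → ℝ), Measurable f →
      eLpNorm (fun x => f (x+h)) rE volume = eLpNorm f rE volume := by
    intro f hf
    exact eLpNorm_comp_measurePreserving hf.aestronglyMeasurable
      (measurePreserving_add_right volume h)
  have hSSle : eLpNorm SS sE volume
      ≤ eLpNorm wt rE volume ^ a + eLpNorm vt rE volume ^ a
        + eLpNorm vt rE volume ^ a := by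
    have hw' : Measurable fun x => |wt (x+h)| ^ a :=
      hrpow_cont.measurable.comp (hwt.comp m1)
    have hv' : Measurable fun x => |vt (x+h)| ^ a :=
      hrpow_cont.measurable.comp (hvtm.comp m1)
    have hv0 : Measurable fun x => |vt x| ^ a := hrpow_cont.measurable.comp hvtm
    have t1 := eLpNorm_add_le (μ := (volume : MeasureTheory.Measure (EuclideanSpace ℝ (Fin d))))
      (p := sE) (f := fun x => |wt (x+h)| ^ a + |vt (x+h)| ^ a) (g := fun x => |vt x| ^ a)
      ((hw'.add hv').aestronglyMeasurable) hv0.aestronglyMeasurable hsE1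
    have t2 := eLpNorm_add_le (μ := (volume : MeasureTheory.Measure (EuclideanSpace ℝ (Fin d))))
      (p := sE) (f := fun x => |wt (x+h)| ^ a) (g := fun x => |vt (x+h)| ^ a)
      (hw'.aestronglyMeasurable) hv'.aestronglyMeasurable hsE1
    have ew : eLpNorm (fun x => |wt (x+h)| ^ a) sE volume = eLpNorm wt rE volume ^ a := by
      have e0 : (fun x => |wt (x+h)| ^ a) = fun x => |(fun y => wt (y+h)) x| ^ a := rfl
      rw [e0, hterm (fun y => wt (y+h)) (hwt.comp m1), htrans wt hwt]
    have ev : eLpNorm (fun x => |vt (x+h)| ^ a) sE volume = eLpNorm vt rE volume ^ a := by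
      have e0 : (fun x => |vt (x+h)| ^ a) = fun x => |(fun y => vt (y+h)) x| ^ a := rfl
      rw [e0, hterm (fun y => vt (y+h)) (hvtm.comp m1), htrans vt hvtm]
    have ev0 : eLpNorm (fun x => |vt x| ^ a) sE volume = eLpNorm vt rE volume ^ a :=
      hterm vt hvtm
    calc eLpNorm SS sE volume
        = eLpNorm ((fun x => |wt (x+h)| ^ a + |vt (x+h)| ^ a)
            + fun x => |vt x| ^ a) sE volume := rfl
      _ ≤ eLpNorm (fun x => |wt (x+h)| ^ a + |vt (x+h)| ^ a) sE volume
            + eLpNorm (fun x => |vt x| ^ a) sE volume := t1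
      _ ≤ (eLpNorm (fun x => |wt (x+h)| ^ a) sE volume
            + eLpNorm (fun x => |vt (x+h)| ^ a) sE volume)
            + eLpNorm (fun x => |vt x| ^ a) sE volume := by
          gcongr
          exact t2
      _ = _ := by rw [ew, ev, ev0]
  have ev0' : eLpNorm (fun x => |vt x| ^ a) sE volume = eLpNorm vt rE volume ^ a :=
    hterm vt hvtm
  calc eLpNorm (fun x => (Fnl d μ (ut (x+h)) - Fnl d μ (wt (x+h)))
      - (Fnl d μ (ut x) - Fnl d μ (wt x))) p' volume
      ≤ (‖a + 1‖₊ : ℝ≥0∞) * eLpNorm (fun x => |g1 x| + |g2 x|) p' volume := hN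
    _ ≤ (‖a + 1‖₊ : ℝ≥0∞) * (eLpNorm g1 p' volume + eLpNorm g2 p' volume) := by gcongr
    _ ≤ (‖a + 1‖₊ : ℝ≥0∞) *
          ((eLpNorm wt rE volume ^ a + eLpNorm vt rE volume ^ a
              + eLpNorm vt rE volume ^ a)
              * eLpNorm (fun x => vt (x+h) - vt x) p volume
            + eLpNorm vt rE volume ^ a * eLpNorm (fun x => wt (x+h) - wt x) p volume) := by
        gcongr
        · exact hold1.trans (by gcongr)
        · exact hold2.trans (by rw [ev0'])
    _ = _ := rfl

end Stmt16Aux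
end aux

set_option maxHeartbeats 1000000

/-- Hölder-type bound on the nonlinearity in the dual Besov Strichartz space `W'`:
`‖F(u)−F(w)‖_{W'} ≲ ‖u−w‖_W (‖u−w‖_S^{4/(d−2)} + ‖w‖_S^{4/(d−2)}) + ‖u−w‖_S^{4/(d−2)} ‖w‖_W`,
where `W = L_t^{2(d+1)/(d−1)} Ḃ^{1/2}_{2(d+1)/(d−1),2}`, `W' = L_t^{2(d+1)/(d+3)}
Ḃ^{1/2}_{2(d+1)/(d+3),2}` and `S = L_{t,x}^{2(d+1)/(d−2)}`. -/


theorem stmt16 (d : ℕ) (hd : 6 ≤ d) (μ : ℝ) (hμ : μ = 1 ∨ μ = -1) :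
    ∃ C : ℝ≥0∞, 0 < C ∧ C ≠ ∞ ∧
      ∀ (I : Set ℝ) (u w : ℝ → EuclideanSpace ℝ (Fin d) → ℝ),
        Measurable (Function.uncurry u) → Measurable (Function.uncurry w) →
        WqNorm d I (2 * ((d : ℝ) + 1) / ((d : ℝ) + 3))
            (fun t x => Fnl d μ (u t x) - Fnl d μ (w t x))
          ≤ C *
            (WqNorm d I (2 * ((d : ℝ) + 1) / ((d : ℝ) - 1)) (fun t x => u t x - w t x)
                * (SNorm d I (fun t x => u t x - w t x) ^ ((4 : ℝ) / ((d : ℝ) - 2))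
                    + SNorm d I w ^ ((4 : ℝ) / ((d : ℝ) - 2)))
              + SNorm d I (fun t x => u t x - w t x) ^ ((4 : ℝ) / ((d : ℝ) - 2))
                * WqNorm d I (2 * ((d : ℝ) + 1) / ((d : ℝ) - 1)) w) := by
  classical
  -- basic real-number facts
  have hD : (6:ℝ) ≤ (d:ℝ) := by exact_mod_cast hd
  have hd2 : (0:ℝ) < (d:ℝ) - 2 := by linarith
  have hd1 : (0:ℝ) < (d:ℝ) - 1 := by linarith
  have hdp1 : (0:ℝ) < (d:ℝ) + 1 := by linarith
  have hdp3 : (0:ℝ) < (d:ℝ) + 3 := by linarith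
  set a : ℝ := (4:ℝ) / ((d:ℝ) - 2) with ha_def
  have ha0 : 0 < a := by positivity
  have ha1 : a ≤ 1 := by
    rw [ha_def, div_le_one hd2]; linarith
  have hμ' : |μ| = 1 := by rcases hμ with h | h <;> simp [h]
  set q' : ℝ := 2 * ((d : ℝ) + 1) / ((d : ℝ) + 3) with hq'def
  set q : ℝ := 2 * ((d : ℝ) + 1) / ((d : ℝ) - 1) with hqdef
  set rr : ℝ := 2 * ((d : ℝ) + 1) / ((d : ℝ) - 2) with hrrdef
  set ss : ℝ := ((d : ℝ) + 1) / 2 with hssdef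
  have hq'0 : 0 < q' := by rw [hq'def]; positivity
  have hq0 : 0 < q := by rw [hqdef]; positivity
  have hrr0 : 0 < rr := by rw [hrrdef]; positivity
  have hss0 : 0 < ss := by rw [hssdef]; positivity
  have hq'1 : 1 ≤ q' := by
    rw [hq'def, le_div_iff₀ hdp3]; linarith
  have hq1 : 1 ≤ q := by
    rw [hqdef, le_div_iff₀ hd1]; linarith
  have hss1 : 1 ≤ ss := by
    rw [hssdef, le_div_iff₀ (by norm_num : (0:ℝ) < 2)]; linarith
  set pt : ℝ := ((d:ℝ) + 3) / ((d:ℝ) - 1) with hptdef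
  set qt : ℝ := ((d:ℝ) + 3) / 4 with hqtdef
  have hconj : pt.HolderConjugate qt := by
    rw [Real.holderConjugate_iff]
    constructor
    · rw [hptdef, lt_div_iff₀ hd1]; linarith
    · rw [hptdef, hqtdef]; field_simp <;> ring
  have hqpt : q' * pt = q := by
    rw [hq'def, hptdef, hqdef]; field_simp <;> ring
  have hqqt : q' * qt = ss := by
    rw [hq'def, hqtdef, hssdef]; field_simp <;> ring
  have hass : a * ss = rr := by
    rw [ha_def, hssdef, hrrdef]; field_simp <;> ring
  have hinvrs : 1 / rr * a = 1 / ss := by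
    rw [ha_def, hssdef, hrrdef]; field_simp <;> ring
  -- ENNReal exponents
  set P' : ℝ≥0∞ := ENNReal.ofReal q' with hP'def
  set P : ℝ≥0∞ := ENNReal.ofReal q with hPdef
  set Rr : ℝ≥0∞ := ENNReal.ofReal rr with hRrdef
  set Se : ℝ≥0∞ := ENNReal.ofReal ss with hSedef
  have hP'0 : P' ≠ 0 := by
    rw [hP'def]; simpa using (ENNReal.ofReal_pos.mpr hq'0).ne'
  have hP't : P' ≠ ∞ := by rw [hP'def]; exact ENNReal.ofReal_ne_top
  have hP0 : P ≠ 0 := by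
    rw [hPdef]; simpa using (ENNReal.ofReal_pos.mpr hq0).ne'
  have hPt : P ≠ ∞ := by rw [hPdef]; exact ENNReal.ofReal_ne_top
  have hRr0 : Rr ≠ 0 := by
    rw [hRrdef]; simpa using (ENNReal.ofReal_pos.mpr hrr0).ne'
  have hRrt : Rr ≠ ∞ := by rw [hRrdef]; exact ENNReal.ofReal_ne_top
  have hp'1E : 1 ≤ P' := ENNReal.one_le_ofReal.mpr hq'1
  have hsE1 : 1 ≤ Se := ENNReal.one_le_ofReal.mpr hss1
  have hpqrE : 1 / P' = 1 / Se + 1 / P := by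
    have h1q : 1 / q' = 1 / ss + 1 / q := by
      rw [hq'def, hssdef, hqdef]; field_simp <;> ring
    rw [hP'def, hSedef, hPdef, one_div, one_div, one_div,
      ← ENNReal.ofReal_inv_of_pos hq'0, ← ENNReal.ofReal_inv_of_pos hss0,
      ← ENNReal.ofReal_inv_of_pos hq0, ← ENNReal.ofReal_add (by positivity) (by positivity)]
    congr 1
    rw [← one_div, ← one_div, ← one_div]
    exact h1q
  have hsrE : Se * ENNReal.ofReal a = Rr := by
    rw [hSedef, hRrdef, ← ENNReal.ofReal_mul hss0.le]
    congr 1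
    rw [mul_comm]; exact hass
  set K : ℝ≥0∞ := (‖a + 1‖₊ : ℝ≥0∞) with hKdef
  have hK0 : (0:ℝ≥0∞) < K := by
    rw [hKdef]
    exact ENNReal.coe_pos.mpr (nnnorm_pos.mpr (by positivity : a + 1 ≠ 0))
  refine ⟨2 * K, ?_, ?_, ?_⟩
  · calc (0:ℝ≥0∞) < K := hK0
      _ = 1 * K := (one_mul _).symm
      _ ≤ 2 * K := by gcongr <;> norm_num
  · rw [hKdef]
    exact ENNReal.mul_ne_top (by norm_num) ENNReal.coe_ne_top
  intro I u w hu hw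
  set v : ℝ → EuclideanSpace ℝ (Fin d) → ℝ := fun t x => u t x - w t x with hvdef
  have hvm : Measurable (Function.uncurry v) := hu.sub hw
  have hAA := Stmt16Aux.meas_A v hvm P hP0 hPt
  have hBB := Stmt16Aux.meas_A w hw P hP0 hPt
  have hVr := Stmt16Aux.meas_V v hvm Rr hRr0 hRrt
  have hWr := Stmt16Aux.meas_V w hw Rr hRr0 hRrt
  have hBvm := Stmt16Aux.meas_besov v hvm P hP0 hPt
  have hBwm := Stmt16Aux.meas_besov w hw P hP0 hPt
  set Vr : ℝ → ℝ≥0∞ := fun t => eLpNorm (v t) Rr volume with hVrdef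
  set Wr : ℝ → ℝ≥0∞ := fun t => eLpNorm (w t) Rr volume with hWrdef
  set Bv : ℝ → ℝ≥0∞ := fun t => besovInt d (1/2) P (v t) with hBvdef
  set Bw : ℝ → ℝ≥0∞ := fun t => besovInt d (1/2) P (w t) with hBwdef
  set XC : ℝ → ℝ≥0∞ := fun t => K * (Wr t ^ a + Vr t ^ a + Vr t ^ a) with hXCdef
  set YC : ℝ → ℝ≥0∞ := fun t => K * Vr t ^ a with hYCdef
  have hXCm : Measurable XC :=
    measurable_const.mul (((hWr.pow_const a).add (hVr.pow_const a)).add (hVr.pow_const a))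
  have hYCm : Measurable YC := measurable_const.mul (hVr.pow_const a)
  -- the per-time Besov estimate
  have hbesov : ∀ t : ℝ,
      besovInt d (1/2) P' (fun x => Fnl d μ (u t x) - Fnl d μ (w t x))
        ≤ XC t * Bv t + YC t * Bw t := by
    intro t
    rw [Stmt16Aux.besov_rw]
    have hBv' : Bv t = (∫⁻ h, ((fun h => eLpNorm (fun x => v t (x + h) - v t x) P volume) h
        * Stmt16Aux.wgt d h) ^ (2:ℝ)) ^ (1/2:ℝ) := Stmt16Aux.besov_rw d P (v t)
    have hBw' : Bw t = (∫⁻ h, ((fun h => eLpNorm (fun x => w t (x + h) - w t x) P volume) h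
        * Stmt16Aux.wgt d h) ^ (2:ℝ)) ^ (1/2:ℝ) := Stmt16Aux.besov_rw d P (w t)
    rw [hBv', hBw']
    have hAt : Measurable (fun h : EuclideanSpace ℝ (Fin d) =>
        eLpNorm (fun x => v t (x + h) - v t x) P volume) := by
      have e : (fun h : EuclideanSpace ℝ (Fin d) =>
          eLpNorm (fun x => v t (x + h) - v t x) P volume)
          = (fun th : ℝ × EuclideanSpace ℝ (Fin d) =>
            eLpNorm (fun x => v th.1 (x + th.2) - v th.1 x) P volume) ∘ (fun h => (t, h)) := by
        funext h; rfl
      rw [e]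
      exact hAA.comp (measurable_const.prodMk measurable_id)
    have hBt : Measurable (fun h : EuclideanSpace ℝ (Fin d) =>
        eLpNorm (fun x => w t (x + h) - w t x) P volume) := by
      have e : (fun h : EuclideanSpace ℝ (Fin d) =>
          eLpNorm (fun x => w t (x + h) - w t x) P volume)
          = (fun th : ℝ × EuclideanSpace ℝ (Fin d) =>
            eLpNorm (fun x => w th.1 (x + th.2) - w th.1 x) P volume) ∘ (fun h => (t, h)) := by
        funext h; rfl
      rw [e]
      exact hBB.comp (measurable_const.prodMk measurable_id)
    apply Stmt16Aux.wmink (volume : Measure (EuclideanSpace ℝ (Fin d)))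
      (fun h => eLpNorm (fun x =>
        (fun x => Fnl d μ (u t x) - Fnl d μ (w t x)) (x + h)
          - (fun x => Fnl d μ (u t x) - Fnl d μ (w t x)) x) P' volume)
      (fun h => eLpNorm (fun x => v t (x + h) - v t x) P volume)
      (fun h => eLpNorm (fun x => w t (x + h) - w t x) P volume)
      (Stmt16Aux.wgt d) (XC t) (YC t)
      hAt hBt (Stmt16Aux.wgt_meas d)
    intro h
    have hsp := Stmt16Aux.spatial ha0 ha1 ha_def hμ' P' P Se Rr hp'1E hsE1 hpqrE hsrE
      (u t) (w t) hu.of_uncurry_left hw.of_uncurry_left h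
    refine le_trans hsp (le_of_eq ?_)
    simp only [hXCdef, hYCdef, hWrdef, hVrdef, hKdef, hvdef]
    rw [mul_add, ← mul_assoc, ← mul_assoc]
  -- unfold the norms in the goal
  simp only [WqNorm, LtNorm, SNorm]
  simp only [← hP'def, ← hPdef, ← hRrdef]
  -- meaningful abbreviations for goal terms
  set Wv : ℝ≥0∞ := (∫⁻ t in I, Bv t ^ q) ^ (1/q) with hWvdef
  set Ww : ℝ≥0∞ := (∫⁻ t in I, Bw t ^ q) ^ (1/q) with hWwdef
  set Sv : ℝ≥0∞ := (∫⁻ t in I, Vr t ^ rr) ^ (1/rr) with hSvdef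
  set Sw : ℝ≥0∞ := (∫⁻ t in I, Wr t ^ rr) ^ (1/rr) with hSwdef
  -- main chain
  have conv1 : ∀ (F : ℝ → ℝ≥0∞),
      (∫⁻ t in I, (F t ^ a) ^ ss) ^ (1/ss) = ((∫⁻ t in I, F t ^ rr) ^ (1/rr)) ^ a := by
    intro F
    have e1 : ∀ t, (F t ^ a) ^ ss = F t ^ rr := fun t => by
      rw [← ENNReal.rpow_mul, hass]
    simp_rw [e1]
    rw [← ENNReal.rpow_mul, hinvrs]
  have hXCs : (∫⁻ t in I, XC t ^ ss) ^ (1/ss) ≤ K * (Sw ^ a + Sv ^ a + Sv ^ a) := by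
    rw [hXCdef]
    rw [Stmt16Aux.const_pull (volume.restrict I) K (fun t => Wr t ^ a + Vr t ^ a + Vr t ^ a)
      (((hWr.pow_const a).add (hVr.pow_const a)).add (hVr.pow_const a)) hss0]
    have h3 := Stmt16Aux.lp3 (volume.restrict I)
      (fun t => Wr t ^ a) (fun t => Vr t ^ a) (fun t => Vr t ^ a)
      (hWr.pow_const a) (hVr.pow_const a) (hVr.pow_const a) hss1
    refine mul_le_mul_right (h3.trans ?_) K
    rw [conv1 Wr, conv1 Vr, ← hSwdef, ← hSvdef]
  have hYCs : (∫⁻ t in I, YC t ^ ss) ^ (1/ss) = K * Sv ^ a := by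
    rw [hYCdef]
    rw [Stmt16Aux.const_pull (volume.restrict I) K _ (hVr.pow_const a) hss0]
    rw [conv1 Vr, ← hSvdef]
  have step1 : (∫⁻ t in I, besovInt d (1/2) P'
        (fun x => Fnl d μ (u t x) - Fnl d μ (w t x)) ^ q') ^ (1/q')
      ≤ (∫⁻ t in I, (XC t * Bv t + YC t * Bw t) ^ q') ^ (1/q') := by
    apply ENNReal.rpow_le_rpow _ (by positivity)
    apply lintegral_mono
    intro t
    exact ENNReal.rpow_le_rpow (hbesov t) hq'0.le
  have step2 : (∫⁻ t in I, (XC t * Bv t + YC t * Bw t) ^ q') ^ (1/q')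
      ≤ (∫⁻ t in I, (XC t * Bv t) ^ q') ^ (1/q')
        + (∫⁻ t in I, (YC t * Bw t) ^ q') ^ (1/q') := by
    have := ENNReal.lintegral_Lp_add_le (μ := volume.restrict I)
      (f := fun t => XC t * Bv t) (g := fun t => YC t * Bw t)
      ((hXCm.mul hBvm).aemeasurable) ((hYCm.mul hBwm).aemeasurable) hq'1
    simpa using this
  have step3 : (∫⁻ t in I, (XC t * Bv t) ^ q') ^ (1/q')
      ≤ Wv * (K * (Sw ^ a + Sv ^ a + Sv ^ a)) := by
    have hcomm : ∀ t, XC t * Bv t = Bv t * XC t := fun t => mul_comm _ _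
    simp_rw [hcomm]
    have := Stmt16Aux.tholder (volume.restrict I) Bv XC hBvm hXCm hconj hq'0 hqpt hqqt
    refine this.trans ?_
    rw [← hWvdef]
    exact mul_le_mul_right hXCs Wv
  have step4 : (∫⁻ t in I, (YC t * Bw t) ^ q') ^ (1/q') ≤ Ww * (K * Sv ^ a) := by
    have hcomm : ∀ t, YC t * Bw t = Bw t * YC t := fun t => mul_comm _ _
    simp_rw [hcomm]
    have := Stmt16Aux.tholder (volume.restrict I) Bw YC hBwm hYCm hconj hq'0 hqpt hqqt
    refine this.trans ?_
    rw [← hWwdef, hYCs]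
  -- final combination
  have hfin : Wv * (K * (Sw ^ a + Sv ^ a + Sv ^ a)) + Ww * (K * Sv ^ a)
      ≤ 2 * K * (Wv * (Sv ^ a + Sw ^ a) + Sv ^ a * Ww) := by
    have h1 : K * (Sw ^ a + Sv ^ a + Sv ^ a) ≤ 2 * K * (Sv ^ a + Sw ^ a) := by
      have h0 : Sw ^ a + Sv ^ a + Sv ^ a ≤ 2 * (Sv ^ a + Sw ^ a) := by
        rw [two_mul]
        calc Sw ^ a + Sv ^ a + Sv ^ a = (Sv ^ a + Sw ^ a) + Sv ^ a := by ring
          _ ≤ (Sv ^ a + Sw ^ a) + (Sv ^ a + Sw ^ a) := by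
              exact add_le_add_right le_self_add _
      calc K * (Sw ^ a + Sv ^ a + Sv ^ a) ≤ K * (2 * (Sv ^ a + Sw ^ a)) :=
            mul_le_mul_right h0 K
        _ = 2 * K * (Sv ^ a + Sw ^ a) := by ring
    have h2 : K * Sv ^ a ≤ 2 * K * Sv ^ a := by
      apply mul_le_mul_left
      calc K = 1 * K := (one_mul _).symm
        _ ≤ 2 * K := by gcongr <;> norm_num
    calc Wv * (K * (Sw ^ a + Sv ^ a + Sv ^ a)) + Ww * (K * Sv ^ a)
        ≤ Wv * (2 * K * (Sv ^ a + Sw ^ a)) + Ww * (2 * K * Sv ^ a) := by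
          exact add_le_add (mul_le_mul_right h1 Wv) (mul_le_mul_right h2 Ww)
      _ = 2 * K * (Wv * (Sv ^ a + Sw ^ a) + Sv ^ a * Ww) := by ring
  calc (∫⁻ t in I, besovInt d (1/2) P'
        (fun x => Fnl d μ (u t x) - Fnl d μ (w t x)) ^ q') ^ (1/q')
      ≤ (∫⁻ t in I, (XC t * Bv t + YC t * Bw t) ^ q') ^ (1/q') := step1
    _ ≤ (∫⁻ t in I, (XC t * Bv t) ^ q') ^ (1/q')
        + (∫⁻ t in I, (YC t * Bw t) ^ q') ^ (1/q') := step2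
    _ ≤ Wv * (K * (Sw ^ a + Sv ^ a + Sv ^ a)) + Ww * (K * Sv ^ a) :=
        add_le_add step3 step4
    _ ≤ 2 * K * (Wv * (Sv ^ a + Sw ^ a) + Sv ^ a * Ww) := hfin
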